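/- Let d ≥ 1, p ≥ 2, v ∈ ℝ^d a unit vector and t > 0. Then for every z, w ∈ ℝ^d one has ‖F_{v,t}(z) − F_{v,t}(w)‖ ≤ (p−1) · (‖H_{v,t}(z)‖^{(p−2)/p} + ‖H_{v,t}(w)‖^{(p−2)/p}) · ‖H_{v,t}(z) − H_{v,t}(w)‖. -/

import Mathlib

/-- `F_{v,t}(z) = (z·v − t)₊^{p−1} v`, where `s₊ = max(s,0)`. -/
noncomputable def Fvt {d : ℕ} (p : ℝ) (v : EuclideanSpace ℝ (Fin d)) (t : ℝ)
    (z : EuclideanSpace ℝ (Fin d)) : EuclideanSpace ℝ (Fin d) :=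
  (max ((inner ℝ z v : ℝ) - t) 0) ^ (p - 1) • v

/-- `H_{v,t}(z) = (z·v − t)₊^{p/2} v`, where `s₊ = max(s,0)`. -/
noncomputable def Hvt {d : ℕ} (p : ℝ) (v : EuclideanSpace ℝ (Fin d)) (t : ℝ)
    (z : EuclideanSpace ℝ (Fin d)) : EuclideanSpace ℝ (Fin d) :=
  (max ((inner ℝ z v : ℝ) - t) 0) ^ (p / 2) • v

/-- MVT tangent-line bound for `x ^ α`, `α ≥ 1`. -/
lemma rpow_sub_rpow_le (α A B : ℝ) (hα : 1 ≤ α) (hB : 0 ≤ B) (hBA : B ≤ A) :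
    A ^ α - B ^ α ≤ α * A ^ (α - 1) * (A - B) := by
  rcases eq_or_lt_of_le hBA with h | h
  · rw [h]; simp
  · have hA : 0 < A := lt_of_le_of_lt hB h
    obtain ⟨c, hc, hc'⟩ := exists_hasDerivAt_eq_slope (fun x => x ^ α)
      (fun x => α * x ^ (α - 1)) h
      (fun x _ => (Real.continuousAt_rpow_const x α (Or.inr (by linarith))).continuousWithinAt)
      (fun x hx => Real.hasDerivAt_rpow_const (Or.inl (ne_of_gt (lt_of_le_of_lt hB hx.1))))
    have hc0 : 0 ≤ c := le_trans hB hc.1.le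
    have hcA : c ≤ A := hc.2.le
    have hpow : c ^ (α - 1) ≤ A ^ (α - 1) :=
      Real.rpow_le_rpow hc0 hcA (by linarith)
    have hne : A - B ≠ 0 := sub_ne_zero.mpr h.ne'
    have hc2 : α * c ^ (α - 1) = (A ^ α - B ^ α) / (A - B) := hc'
    have hslope : A ^ α - B ^ α = α * c ^ (α - 1) * (A - B) := by
      rw [hc2, div_mul_cancel₀ _ hne]
    rw [hslope]
    have hα0 : 0 ≤ α := by linarith
    nlinarith [mul_le_mul_of_nonneg_left hpow hα0]

lemma scalar_ineq (p : ℝ) (hp : 2 ≤ p) (a b : ℝ) (ha : 0 ≤ a) (hb : 0 ≤ b) :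
    |a ^ (p - 1) - b ^ (p - 1)| ≤
      (p - 1) * (a ^ ((p - 2) / 2) + b ^ ((p - 2) / 2)) * |a ^ (p / 2) - b ^ (p / 2)| := by
  have hp0 : (0 : ℝ) < p := by linarith
  wlog hab : b ≤ a with H
  · have := H p hp b a hb ha hp0 (le_of_not_ge hab)
    rw [abs_sub_comm, abs_sub_comm (b ^ (p / 2)),
      add_comm (b ^ ((p - 2) / 2))] at this
    linarith [this]
  · -- b ≤ a case
    have hpne : p ≠ 0 := ne_of_gt hp0
    set α := 2 * (p - 1) / p with hαdef
    have hα1 : 1 ≤ α := by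
      rw [hαdef, le_div_iff₀ hp0]; linarith
    have hαp : α ≤ p - 1 := by
      rw [hαdef, div_le_iff₀ hp0]; nlinarith
    set A := a ^ (p / 2) with hA
    set B := b ^ (p / 2) with hB
    have hA0 : 0 ≤ A := Real.rpow_nonneg ha _
    have hB0 : 0 ≤ B := Real.rpow_nonneg hb _
    have hBA : B ≤ A := Real.rpow_le_rpow hb hab (by positivity)
    have hAα : A ^ α = a ^ (p - 1) := by
      rw [hA, ← Real.rpow_mul ha]
      congr 1; rw [hαdef]; field_simp
    have hBα : B ^ α = b ^ (p - 1) := by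
      rw [hB, ← Real.rpow_mul hb]
      congr 1; rw [hαdef]; field_simp
    have hAα1 : A ^ (α - 1) = a ^ ((p - 2) / 2) := by
      rw [hA, ← Real.rpow_mul ha]
      congr 1; rw [hαdef]; field_simp; ring
    have hBα1 : B ^ (α - 1) = b ^ ((p - 2) / 2) := by
      rw [hB, ← Real.rpow_mul hb]
      congr 1; rw [hαdef]; field_simp; ring
    have key := rpow_sub_rpow_le α A B hα1 hB0 hBA
    have habp : b ^ (p - 1) ≤ a ^ (p - 1) := Real.rpow_le_rpow hb hab (by linarith)
    rw [abs_of_nonneg (by linarith : (0:ℝ) ≤ a ^ (p-1) - b ^ (p-1)),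
        abs_of_nonneg (by linarith : (0:ℝ) ≤ a ^ (p/2) - b ^ (p/2))]
    have h1 : a ^ (p - 1) - b ^ (p - 1) ≤ α * A ^ (α - 1) * (A - B) := by
      rw [← hAα, ← hBα]; exact key
    have hAα10 : 0 ≤ A ^ (α - 1) := Real.rpow_nonneg hA0 _
    have hBα10 : 0 ≤ B ^ (α - 1) := Real.rpow_nonneg hB0 _
    have h2 : α * A ^ (α - 1) * (A - B) ≤
        (p - 1) * (A ^ (α - 1) + B ^ (α - 1)) * (A - B) := by
      apply mul_le_mul_of_nonneg_right _ (by linarith)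
      nlinarith
    calc a ^ (p - 1) - b ^ (p - 1) ≤ (p - 1) * (A ^ (α - 1) + B ^ (α - 1)) * (A - B) :=
          le_trans h1 h2
      _ = (p - 1) * (a ^ ((p - 2) / 2) + b ^ ((p - 2) / 2)) * (a ^ (p / 2) - b ^ (p / 2)) := by
          rw [hAα1, hBα1]

/-- for `p ≥ 2`, `v` a unit vector and `t > 0`, for all `z, w ∈ ℝ^d`,
`‖F(z) − F(w)‖ ≤ (p−1)(‖H(z)‖^{(p−2)/p} + ‖H(w)‖^{(p−2)/p})‖H(z) − H(w)‖`. -/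
theorem stmt_2 {d : ℕ} (hd : 1 ≤ d) (p : ℝ) (hp : 2 ≤ p)
    (v : EuclideanSpace ℝ (Fin d)) (hv : ‖v‖ = 1) (t : ℝ) (ht : 0 < t)
    (z w : EuclideanSpace ℝ (Fin d)) :
    ‖Fvt p v t z - Fvt p v t w‖ ≤
      (p - 1) * (‖Hvt p v t z‖ ^ ((p - 2) / p) + ‖Hvt p v t w‖ ^ ((p - 2) / p)) *
        ‖Hvt p v t z - Hvt p v t w‖ := by
  have hp0 : (0 : ℝ) < p := by linarith
  have hpne : p ≠ 0 := ne_of_gt hp0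
  set a := max ((inner ℝ z v : ℝ) - t) 0 with hadef
  set b := max ((inner ℝ w v : ℝ) - t) 0 with hbdef
  have ha : 0 ≤ a := le_max_right _ _
  have hb : 0 ≤ b := le_max_right _ _
  have hF : Fvt p v t z - Fvt p v t w = (a ^ (p - 1) - b ^ (p - 1)) • v := by
    rw [Fvt, Fvt, sub_smul]
  have hH : Hvt p v t z - Hvt p v t w = (a ^ (p / 2) - b ^ (p / 2)) • v := by
    rw [Hvt, Hvt, sub_smul]
  have hHz : ‖Hvt p v t z‖ = a ^ (p / 2) := by
    rw [Hvt, norm_smul, hv, mul_one, Real.norm_eq_abs,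
      abs_of_nonneg (Real.rpow_nonneg ha _)]
  have hHw : ‖Hvt p v t w‖ = b ^ (p / 2) := by
    rw [Hvt, norm_smul, hv, mul_one, Real.norm_eq_abs,
      abs_of_nonneg (Real.rpow_nonneg hb _)]
  rw [hF, hH, hHz, hHw, norm_smul, norm_smul, hv, mul_one, mul_one,
    Real.norm_eq_abs, Real.norm_eq_abs]
  have hexpz : (a ^ (p / 2)) ^ ((p - 2) / p) = a ^ ((p - 2) / 2) := by
    rw [← Real.rpow_mul ha]; congr 1; field_simp
  have hexpw : (b ^ (p / 2)) ^ ((p - 2) / p) = b ^ ((p - 2) / 2) := by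
    rw [← Real.rpow_mul hb]; congr 1; field_simp
  rw [hexpz, hexpw]
  exact scalar_ineq p hp a b ha hb
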